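/- Let T ⊆ [0,1) and μ a Borel probability measure on T. With A^(k)_i = [i·4^(-k),(i+1)·4^(-k)) ∩ T, one has ∫_T ∫₀¹ (μ(B(t,r²)))^(-1/2) dr dμ(t) ≤ Σ_{k=1}^∞ 2^(-k) Σ_{i=0}^{4^k-1} (μ(A^(k)_i))^(1/2). -/

import Mathlib

open MeasureTheory ENNReal

/-- `a⁻¹ᐟ² * a = a¹ᐟ²` in `ℝ≥0∞` (for `a ≠ ∞`). -/
private lemma rpow_half_mul (a : ℝ≥0∞) (ha : a ≠ ∞) :
    a ^ (-(1:ℝ)/2) * a = a ^ ((1:ℝ)/2) := by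
  rcases eq_or_ne a 0 with rfl | h0
  · simp
  · nth_rewrite 2 [← ENNReal.rpow_one a]
    rw [← ENNReal.rpow_add _ _ h0 ha]
    norm_num

private lemma rpow_neg_half_anti {a b : ℝ≥0∞} (hab : a ≤ b) :
    b ^ (-(1:ℝ)/2) ≤ a ^ (-(1:ℝ)/2) := by
  have h : -(1:ℝ)/2 = -(1/2) := by norm_num
  rw [h, ENNReal.rpow_neg, ENNReal.rpow_neg]
  exact ENNReal.inv_le_inv.mpr (ENNReal.rpow_le_rpow hab (by norm_num))

theorem stmt2 (T : Set ℝ) (hT : T ⊆ Set.Ico (0:ℝ) 1) (hTne : T.Nonempty)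
    (μ : Measure ℝ) [IsProbabilityMeasure μ] (hμT : μ T = 1) :
    ∫⁻ t in T, (∫⁻ r in Set.Ioc (0:ℝ) 1, (μ {s | s ∈ T ∧ |s - t| ≤ r ^ 2}) ^ (-(1:ℝ)/2)) ∂μ ≤
      ∑' k : ℕ, 2⁻¹ ^ (k + 1) *
        ∑ i ∈ Finset.range (4 ^ (k + 1)),
          (μ (Set.Ico ((i : ℝ) * ((4:ℝ) ^ (k + 1))⁻¹) (((i : ℝ) + 1) * ((4:ℝ) ^ (k + 1))⁻¹) ∩ T))
            ^ ((1:ℝ)/2) := by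
  classical
  set F : ℕ → ℤ → ℝ≥0∞ := fun k j =>
    (μ (Set.Ico ((j : ℝ) * ((4:ℝ) ^ (k + 1))⁻¹) (((j : ℝ) + 1) * ((4:ℝ) ^ (k + 1))⁻¹) ∩ T))
      ^ (-(1:ℝ)/2) with hF
  set c : ℕ → ℝ → ℝ≥0∞ := fun k t => F k ⌊t * (4:ℝ) ^ (k + 1)⌋ with hc
  have h4pos : ∀ k : ℕ, (0:ℝ) < (4:ℝ) ^ (k + 1) := fun k => by positivity
  -- membership of t in its own cell
  have hmem : ∀ (k : ℕ) (t : ℝ),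
      (⌊t * (4:ℝ) ^ (k+1)⌋ : ℝ) * ((4:ℝ) ^ (k+1))⁻¹ ≤ t ∧
      t < ((⌊t * (4:ℝ) ^ (k+1)⌋ : ℝ) + 1) * ((4:ℝ) ^ (k+1))⁻¹ := by
    intro k t
    have h4 := h4pos k
    constructor
    · have := Int.floor_le (t * (4:ℝ) ^ (k+1))
      calc (⌊t * (4:ℝ) ^ (k+1)⌋ : ℝ) * ((4:ℝ) ^ (k+1))⁻¹
          ≤ t * (4:ℝ) ^ (k+1) * ((4:ℝ) ^ (k+1))⁻¹ :=
            mul_le_mul_of_nonneg_right this (by positivity)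
        _ = t := by field_simp
    · have h := Int.lt_floor_add_one (t * (4:ℝ) ^ (k+1))
      calc t = t * (4:ℝ) ^ (k+1) * ((4:ℝ) ^ (k+1))⁻¹ := by field_simp
        _ < ((⌊t * (4:ℝ) ^ (k+1)⌋ : ℝ) + 1) * ((4:ℝ) ^ (k+1))⁻¹ :=
            mul_lt_mul_of_pos_right h (by positivity)
  have hcmeas : ∀ k : ℕ, Measurable (c k) := by
    intro k
    have h1 : Measurable (fun t : ℝ => ⌊t * (4:ℝ) ^ (k+1)⌋) :=
      Int.measurable_floor.comp (measurable_id.mul_const _)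
    exact Measurable.comp (g := fun j : ℤ => F k j) measurable_from_top h1
  -- Step 1: pointwise bound on the inner integral
  have step1 : ∀ t : ℝ,
      (∫⁻ r in Set.Ioc (0:ℝ) 1, (μ {s | s ∈ T ∧ |s - t| ≤ r ^ 2}) ^ (-(1:ℝ)/2)) ≤
        ∑' k : ℕ, 2⁻¹ ^ (k + 1) * c k t := by
    intro t
    have hcover : Set.Ioc (0:ℝ) 1 ⊆ ⋃ k : ℕ, Set.Ioc ((2:ℝ)⁻¹ ^ (k+1)) ((2:ℝ)⁻¹ ^ k) := by
      rintro r ⟨hr0, hr1⟩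
      have hex : ∃ n : ℕ, (2:ℝ)⁻¹ ^ (n + 1) < r := by
        obtain ⟨n, hn⟩ := exists_pow_lt_of_lt_one hr0 (by norm_num : (2:ℝ)⁻¹ < 1)
        exact ⟨n, lt_of_le_of_lt (pow_le_pow_of_le_one (by norm_num) (by norm_num)
          (Nat.le_succ n)) hn⟩
      refine Set.mem_iUnion.mpr ⟨Nat.find hex, Nat.find_spec hex, ?_⟩
      rcases Nat.eq_zero_or_pos (Nat.find hex) with h0 | hpos
      · rw [h0]; simpa using hr1
      · obtain ⟨m, hm⟩ : ∃ m, Nat.find hex = m + 1 :=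
          ⟨Nat.find hex - 1, (Nat.succ_pred_eq_of_pos hpos).symm⟩
        have := Nat.find_min hex (m := m) (by omega)
        rw [hm]
        linarith [not_lt.mp this]
    calc (∫⁻ r in Set.Ioc (0:ℝ) 1, (μ {s | s ∈ T ∧ |s - t| ≤ r ^ 2}) ^ (-(1:ℝ)/2))
        ≤ ∫⁻ r in ⋃ k : ℕ, Set.Ioc ((2:ℝ)⁻¹ ^ (k+1)) ((2:ℝ)⁻¹ ^ k),
            (μ {s | s ∈ T ∧ |s - t| ≤ r ^ 2}) ^ (-(1:ℝ)/2) :=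
          lintegral_mono_set hcover
      _ ≤ ∑' k : ℕ, ∫⁻ r in Set.Ioc ((2:ℝ)⁻¹ ^ (k+1)) ((2:ℝ)⁻¹ ^ k),
            (μ {s | s ∈ T ∧ |s - t| ≤ r ^ 2}) ^ (-(1:ℝ)/2) :=
          lintegral_iUnion_le _ _
      _ ≤ ∑' k : ℕ, 2⁻¹ ^ (k + 1) * c k t := by
          refine ENNReal.tsum_le_tsum fun k => ?_
          have hbound : ∀ r ∈ Set.Ioc ((2:ℝ)⁻¹ ^ (k+1)) ((2:ℝ)⁻¹ ^ k),
              (μ {s | s ∈ T ∧ |s - t| ≤ r ^ 2}) ^ (-(1:ℝ)/2) ≤ c k t := by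
            intro r hr
            refine rpow_neg_half_anti (measure_mono ?_)
            rintro s ⟨⟨hs1, hs2⟩, hsT⟩
            refine ⟨hsT, ?_⟩
            have ht1 := (hmem k t).1
            have ht2 := (hmem k t).2
            have hinv : ((4:ℝ) ^ (k+1))⁻¹ ≤ r ^ 2 := by
              have h1 : (2:ℝ)⁻¹ ^ (k+1) < r := hr.1
              have h2 : ((2:ℝ)⁻¹ ^ (k+1)) ^ 2 ≤ r ^ 2 :=
                pow_le_pow_left₀ (by positivity) (le_of_lt h1) 2
              calc ((4:ℝ) ^ (k+1))⁻¹ = ((2:ℝ)⁻¹ ^ (k+1)) ^ 2 := by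
                    rw [inv_pow, inv_pow, ← pow_mul,
                      show (4:ℝ) = 2 ^ 2 by norm_num, ← pow_mul]
                    congr 1
                    ring
                _ ≤ r ^ 2 := h2
            rw [abs_le]
            constructor <;> nlinarith
          calc (∫⁻ r in Set.Ioc ((2:ℝ)⁻¹ ^ (k+1)) ((2:ℝ)⁻¹ ^ k),
                (μ {s | s ∈ T ∧ |s - t| ≤ r ^ 2}) ^ (-(1:ℝ)/2))
              ≤ ∫⁻ _ in Set.Ioc ((2:ℝ)⁻¹ ^ (k+1)) ((2:ℝ)⁻¹ ^ k), c k t :=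
                setLIntegral_mono' measurableSet_Ioc hbound
            _ = c k t * volume (Set.Ioc ((2:ℝ)⁻¹ ^ (k+1)) ((2:ℝ)⁻¹ ^ k)) := by
                rw [setLIntegral_const]
            _ = 2⁻¹ ^ (k + 1) * c k t := by
                rw [Real.volume_Ioc, mul_comm]
                congr 1
                have h : (2:ℝ)⁻¹ ^ k - (2:ℝ)⁻¹ ^ (k+1) = (2:ℝ)⁻¹ ^ (k+1) := by ring
                rw [h, ENNReal.ofReal_pow (by norm_num : (0:ℝ) ≤ 2⁻¹)]
                congr 1
                rw [ENNReal.ofReal_inv_of_pos (by norm_num : (0:ℝ) < 2)]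
                norm_num
  -- Step 2: per-level bound on the outer integral
  have step2 : ∀ k : ℕ, (∫⁻ t in T, c k t ∂μ) ≤
      ∑ i ∈ Finset.range (4 ^ (k + 1)),
        (μ (Set.Ico ((i : ℝ) * ((4:ℝ) ^ (k + 1))⁻¹) (((i : ℝ) + 1) * ((4:ℝ) ^ (k + 1))⁻¹) ∩ T))
          ^ ((1:ℝ)/2) := by
    intro k
    set s : ℕ → Set ℝ := fun i =>
      Set.Ico ((i : ℝ) * ((4:ℝ) ^ (k + 1))⁻¹) (((i : ℝ) + 1) * ((4:ℝ) ^ (k + 1))⁻¹) with hs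
    have hTsub : T ⊆ ⋃ i : ℕ, s i := by
      intro t ht
      obtain ⟨ht0, ht1⟩ := hT ht
      have hfl0 : (0:ℤ) ≤ ⌊t * (4:ℝ) ^ (k+1)⌋ := Int.floor_nonneg.mpr (by positivity)
      have hcast : ((⌊t * (4:ℝ) ^ (k+1)⌋.toNat : ℕ) : ℝ) = (⌊t * (4:ℝ) ^ (k+1)⌋ : ℝ) := by
        rw_mod_cast [Int.toNat_of_nonneg hfl0]
      refine Set.mem_iUnion.mpr ⟨⌊t * (4:ℝ) ^ (k+1)⌋.toNat, Set.mem_Ico.mpr ⟨?_, ?_⟩⟩ <;>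
        rw [hcast]
      · exact (hmem k t).1
      · exact (hmem k t).2
    have hae : ∀ᵐ x ∂(μ.restrict T), x ∈ ⋃ i : ℕ, s i := by
      rw [ae_iff]
      have hms : MeasurableSet (⋃ i : ℕ, s i) :=
        MeasurableSet.iUnion fun i => measurableSet_Ico
      have heq : {x | ¬ x ∈ ⋃ i : ℕ, s i} = (⋃ i : ℕ, s i)ᶜ := rfl
      rw [heq, Measure.restrict_apply hms.compl]
      have h0 : (⋃ i : ℕ, s i)ᶜ ∩ T = ∅ := by
        ext x
        simp only [Set.mem_inter_iff, Set.mem_compl_iff, Set.mem_empty_iff_false,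
          iff_false, not_and]
        exact fun hx1 hx2 => hx1 (hTsub hx2)
      rw [h0, measure_empty]
    have hfloor_eq : ∀ (i : ℕ) (t : ℝ), t ∈ s i → ⌊t * (4:ℝ) ^ (k+1)⌋ = (i : ℤ) := by
      rintro i t ⟨ht1, ht2⟩
      have h4 := h4pos k
      rw [Int.floor_eq_iff]
      constructor
      · push_cast
        calc ((i:ℝ)) = (i:ℝ) * ((4:ℝ) ^ (k+1))⁻¹ * (4:ℝ) ^ (k+1) := by field_simp
          _ ≤ t * (4:ℝ) ^ (k+1) := mul_le_mul_of_nonneg_right ht1 (le_of_lt h4)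
      · push_cast
        calc t * (4:ℝ) ^ (k+1)
            < ((i:ℝ) + 1) * ((4:ℝ) ^ (k+1))⁻¹ * (4:ℝ) ^ (k+1) :=
              mul_lt_mul_of_pos_right ht2 h4
          _ = (i:ℝ) + 1 := by field_simp
    have hterm : ∀ i : ℕ, (∫⁻ t in s i, c k t ∂(μ.restrict T)) =
        (μ (s i ∩ T)) ^ ((1:ℝ)/2) := by
      intro i
      have hconst : ∀ t ∈ s i, c k t = F k (i : ℤ) := by
        intro t ht
        rw [hc]
        simp only
        rw [hfloor_eq i t ht]
      calc (∫⁻ t in s i, c k t ∂(μ.restrict T))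
          = ∫⁻ _ in s i, F k (i : ℤ) ∂(μ.restrict T) :=
            setLIntegral_congr_fun measurableSet_Ico hconst
        _ = F k (i : ℤ) * (μ.restrict T) (s i) := setLIntegral_const _ _
        _ = (μ (s i ∩ T)) ^ (-(1:ℝ)/2) * μ (s i ∩ T) := by
            rw [Measure.restrict_apply measurableSet_Ico, hF]
            push_cast
            rfl
        _ = (μ (s i ∩ T)) ^ ((1:ℝ)/2) := rpow_half_mul _ (measure_ne_top μ _)
    calc (∫⁻ t in T, c k t ∂μ)
        = ∫⁻ t in ⋃ i : ℕ, s i, c k t ∂(μ.restrict T) := by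
          rw [Measure.restrict_eq_self_of_ae_mem hae]
      _ ≤ ∑' i : ℕ, ∫⁻ t in s i, c k t ∂(μ.restrict T) := lintegral_iUnion_le _ _
      _ = ∑' i : ℕ, (μ (s i ∩ T)) ^ ((1:ℝ)/2) := by
          exact tsum_congr hterm
      _ = ∑ i ∈ Finset.range (4 ^ (k + 1)), (μ (s i ∩ T)) ^ ((1:ℝ)/2) := by
          refine tsum_eq_sum fun i hi => ?_
          have hi' : (4:ℕ) ^ (k+1) ≤ i := by
            by_contra hlt
            exact hi (Finset.mem_range.mpr (not_le.mp hlt))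
          have hempty : s i ∩ T = ∅ := by
            ext x
            simp only [Set.mem_inter_iff, Set.mem_empty_iff_false, iff_false, not_and]
            rintro ⟨hx1, _⟩ hxT
            have hx1' : (1:ℝ) ≤ x := by
              have h4 := h4pos k
              have : ((4:ℕ) ^ (k+1) : ℝ) ≤ (i:ℝ) := by exact_mod_cast hi'
              have h41 : ((4:ℝ) ^ (k+1)) * ((4:ℝ) ^ (k+1))⁻¹ = 1 := by field_simp
              calc (1:ℝ) = (4:ℝ) ^ (k+1) * ((4:ℝ) ^ (k+1))⁻¹ := h41.symm
                _ ≤ (i:ℝ) * ((4:ℝ) ^ (k+1))⁻¹ := by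
                    apply mul_le_mul_of_nonneg_right _ (by positivity)
                    push_cast at this ⊢
                    linarith
                _ ≤ x := hx1
            exact absurd (hT hxT).2 (not_lt.mpr hx1')
          rw [hempty, measure_empty, ENNReal.zero_rpow_of_pos (by norm_num)]
      _ = _ := rfl
  -- Assemble
  calc (∫⁻ t in T, (∫⁻ r in Set.Ioc (0:ℝ) 1,
          (μ {s | s ∈ T ∧ |s - t| ≤ r ^ 2}) ^ (-(1:ℝ)/2)) ∂μ)
      ≤ ∫⁻ t in T, (∑' k : ℕ, 2⁻¹ ^ (k + 1) * c k t) ∂μ :=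
        lintegral_mono fun t => step1 t
    _ = ∑' k : ℕ, ∫⁻ t in T, 2⁻¹ ^ (k + 1) * c k t ∂μ := by
        refine lintegral_tsum fun k => ?_
        exact ((hcmeas k).const_mul _).aemeasurable
    _ = ∑' k : ℕ, 2⁻¹ ^ (k + 1) * ∫⁻ t in T, c k t ∂μ := by
        refine tsum_congr fun k => ?_
        exact lintegral_const_mul' _ _
          (ENNReal.pow_ne_top (ENNReal.inv_ne_top.mpr (by norm_num)))
    _ ≤ _ := ENNReal.tsum_le_tsum fun k => mul_le_mul_right (step2 k) _
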